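/- Let P be a finite poset, let I ⊆ Inc(P), and suppose there is at least one alternating cycle in P all of whose pairs belong to I. Then any alternating cycle with all pairs in I whose size k is minimum among all alternating cycles with all pairs in I is a strict alternating cycle. -/

import Mathlib

/-!
Common definitions for formalizing dimension theory of finite posets,
following Kozik–Micek–Trotter, "Dimension is polynomial in height for
posets with planar cover graphs".
-/

namespace PlanarDim

variable {α : Type*}

/-- Two elements of a poset are incomparable. -/
def Incomp [PartialOrder α] (a b : α) : Prop := ¬ a ≤ b ∧ ¬ b ≤ a

/-- `Inc(P)`: the set of ordered pairs of incomparable elements. -/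
def incPairs (α : Type*) [PartialOrder α] : Set (α × α) := {p | Incomp p.1 p.2}

/-- A linear order `L` on the ground set is a linear extension of the partial order. -/
def IsLinExt [PartialOrder α] (L : LinearOrder α) : Prop :=
  ∀ x y : α, x ≤ y → L.le x y

/-- A set `I` of ordered pairs is reversible if some linear extension of the
partial order reverses every pair of `I` (i.e. puts the second coordinate
strictly below the first). -/
def Reversible [PartialOrder α] (I : Set (α × α)) : Prop :=
  ∃ L : LinearOrder α, IsLinExt L ∧ ∀ p ∈ I, L.lt p.2 p.1

/-- The cyclic successor on `Fin k`. -/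
def nextIdx {k : ℕ} (i : Fin k) : Fin k := ⟨(i.1 + 1) % k, Nat.mod_lt _ i.pos⟩

/-- `((x 0, y 0), …, (x (k-1), y (k-1)))` is an alternating cycle:
`k ≥ 2`, each pair is incomparable, and `x i ≤ y (i+1)` cyclically. -/
def IsAltCycle [PartialOrder α] {k : ℕ} (x y : Fin k → α) : Prop :=
  2 ≤ k ∧ (∀ i, Incomp (x i) (y i)) ∧ ∀ i, x i ≤ y (nextIdx i)

/-- A strict alternating cycle: `k ≥ 2`, each pair is incomparable, and
`x i ≤ y j` holds exactly when `j = i + 1` cyclically. -/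
def IsStrictAltCycle [PartialOrder α] {k : ℕ} (x y : Fin k → α) : Prop :=
  2 ≤ k ∧ (∀ i, Incomp (x i) (y i)) ∧ ∀ i j, x i ≤ y j ↔ j = nextIdx i

/-- `dim(I)`: the least `d ≥ 1` such that `I` can be covered by `d` reversible
subsets of `Inc(P)`. -/
noncomputable def dimI [PartialOrder α] (I : Set (α × α)) : ℕ :=
  sInf {d | 1 ≤ d ∧ ∃ J : Fin d → Set (α × α),
    (∀ i, J i ⊆ incPairs α ∧ Reversible (J i)) ∧ I ⊆ ⋃ i, J i}

/-- The Dushnik–Miller dimension of a poset: the least `d ≥ 1` for which there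
are linear orders `L 0, …, L (d-1)` on the ground set with `x ≤ y` in the poset
iff `x ≤ y` in every `L i`. -/
noncomputable def posetDim (α : Type*) [PartialOrder α] : ℕ :=
  sInf {d | 1 ≤ d ∧ ∃ L : Fin d → LinearOrder α,
    ∀ x y : α, x ≤ y ↔ ∀ i, (L i).le x y}

/-- The height of a poset: the maximum number of elements in a chain. -/
noncomputable def posetHeight (α : Type*) [PartialOrder α] : ℕ :=
  sSup {n | ∃ s : Finset α, s.card = n ∧ IsChain (· ≤ ·) (↑s : Set α)}

/-- The cover graph of a poset: distinct `x` and `y` are adjacent iff one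
covers the other. -/
def coverGraph (α : Type*) [PartialOrder α] : SimpleGraph α where
  Adj x y := x ⋖ y ∨ y ⋖ x
  symm := ⟨fun x y h => Or.symm h⟩
  loopless := ⟨fun x h => by rcases h with h | h <;> exact absurd h.lt (lt_irrefl x)⟩

/-- `Min(P)`: the set of minimal elements. -/
def minSet (α : Type*) [PartialOrder α] : Set α := {x | IsMin x}

/-- `Max(P)`: the set of maximal elements. -/
def maxSet (α : Type*) [PartialOrder α] : Set α := {x | IsMax x}

/-- `Inc(Min(P), Max(P))`: incomparable pairs `(a, b)` with `a` minimal and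
`b` maximal. -/
def incMinMax (α : Type*) [PartialOrder α] : Set (α × α) :=
  {p | p ∈ incPairs α ∧ p.1 ∈ minSet α ∧ p.2 ∈ maxSet α}

/-- `WReach_r[G, σ, v]`: the set of vertices `u` weakly `r`-reachable from `v`
in the ordering `σ`: there is a path from `v` to `u` of length at most `r` all
of whose vertices are `≥ u` in `σ`. -/
def WReach (G : SimpleGraph α) (σ : LinearOrder α) (r : ℕ) (v : α) : Set α :=
  {u | ∃ p : G.Walk v u, p.IsPath ∧ p.length ≤ r ∧ ∀ w ∈ p.support, σ.le u w}

/-- The weak `r`-coloring number of a finite graph: the minimum over vertex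
orderings `σ` of the maximum over vertices `v` of `|WReach_r[G, σ, v]|`. -/
noncomputable def wcol (α : Type*) [Fintype α] (G : SimpleGraph α) (r : ℕ) : ℕ :=
  sInf {c | ∃ σ : LinearOrder α,
    c = Finset.univ.sup fun v => (WReach G σ r v).ncard}

end PlanarDim

open PlanarDim in
/-- An alternating cycle with all pairs in `I` of minimum
size among all alternating cycles with all pairs in `I` is a strict
alternating cycle. -/
theorem minimum_alternating_cycle_is_strict
    {α : Type*} [Fintype α] [PartialOrder α]
    (I : Set (α × α)) (hI : I ⊆ incPairs α)
    {k : ℕ} (x y : Fin k → α)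
    (hcyc : IsAltCycle x y) (hmem : ∀ i, (x i, y i) ∈ I)
    (hmin : ∀ (m : ℕ) (x' y' : Fin m → α),
      IsAltCycle x' y' → (∀ i, (x' i, y' i) ∈ I) → k ≤ m) :
    IsStrictAltCycle x y := by

  obtain ⟨hk, hinc, hle⟩ := hcyc
  refine ⟨hk, hinc, fun i j => ⟨fun hxy => ?_, fun hj => hj ▸ hle i⟩⟩
  by_contra hne
  have hk0 : 0 < k := by omega
  have hjk := j.2
  have hik := i.2
  have hij : i.1 ≠ j.1 := by
    intro h
    exact (hinc i).1 (by rwa [show j = i from Fin.ext h.symm] at hxy)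
  set d : ℕ := if j.1 < i.1 then i.1 - j.1 else i.1 + k - j.1 with hd
  have hd1 : 1 ≤ d := by dsimp only [d]; split <;> omega
  have hdk : d ≤ k - 1 := by dsimp only [d]; split <;> omega
  have hdk2 : d ≠ k - 1 := by
    intro h
    apply hne
    apply Fin.ext
    simp only [nextIdx]
    dsimp only [d] at h
    split at h
    · rw [show i.1 + 1 = k by omega, Nat.mod_self]; omega
    · rw [Nat.mod_eq_of_lt (show i.1 + 1 < k by omega)]; omega
  have hfd : (j.1 + d) % k = i.1 := by
    dsimp only [d]
    split
    · rw [show j.1 + (i.1 - j.1) = i.1 by omega, Nat.mod_eq_of_lt hik]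
    · rw [show j.1 + (i.1 + k - j.1) = i.1 + k by omega, Nat.add_mod_right,
        Nat.mod_eq_of_lt hik]
  set f : Fin (d + 1) → Fin k := fun t => ⟨(j.1 + t.1) % k, Nat.mod_lt _ hk0⟩ with hf
  have hcyc' : IsAltCycle (x ∘ f) (y ∘ f) := by
    refine ⟨by omega, fun t => hinc (f t), fun t => ?_⟩
    simp only [Function.comp]
    by_cases ht : t.1 + 1 < d + 1
    · have h2 : f (nextIdx t) = nextIdx (f t) := by
        apply Fin.ext
        simp only [hf, nextIdx, Nat.mod_add_mod, Nat.mod_eq_of_lt ht]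
        rw [Nat.add_assoc]
      rw [h2]; exact hle (f t)
    · have ht' : t.1 = d := by have := t.2; omega
      have hft : f t = i := Fin.ext (by rw [show (f t).1 = (j.1 + t.1) % k from rfl, ht']; exact hfd)
      have hf0 : f (nextIdx t) = j := by
        apply Fin.ext
        have : (nextIdx t).1 = 0 := by simp [nextIdx, ht']
        simp [hf, this, Nat.mod_eq_of_lt hjk]
      rw [hft, hf0]; exact hxy
  have := hmin (d + 1) (x ∘ f) (y ∘ f) hcyc' (fun t => hmem (f t))
  omega
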